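/- Unit partition of energy in d dimensions: for N = n^d with n a power of two, any subtree T of the d-dimensional FFT tree T^full_N, and Ĝ_v the (v,T)-isolating filters obtained by tensoring one-dimensional adaptive aliasing filters, for every ξ ∈ [n]^d one has Σ_{v ∈ Leaves(T)} |Ĝ_v(ξ)|² = 1. -/

import Mathlib

open scoped Classical

noncomputable section

/-- `T` is a subtree of the full binary tree of depth `D`: nodes are pairs `(t, a)` of a
level `t ≤ D` and a (flattened) label `a ∈ [2^t]`; `T` contains the root `(0, 0)` and is
closed under taking parents (the parent of `(t+1, a)` is `(t, a % 2^t)`).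
For `D = d ⬝ m` this is the `d`-dimensional FFT computation tree `T^full_N` on the universe
`[n]^d` with `n = 2^m` and `N = n^d`, which peels off one bit of one coordinate at a time
(least significant bit of coordinate `0` first); the flattened label `a` of a node at level
`t` encodes the determined bits of the `d` coordinate labels, coordinate `q` occupying the
bits `q⬝m, …, q⬝m + m − 1` of `a`. -/
def IsSubtree (D : ℕ) (T : Set (ℕ × ℕ)) : Prop :=
  (0, 0) ∈ T ∧ (∀ t a : ℕ, (t + 1, a) ∈ T → (t, a % 2 ^ t) ∈ T) ∧
    ∀ t a : ℕ, (t, a) ∈ T → t ≤ D ∧ a < 2 ^ t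

/-- `(t, a)` is a leaf of `T`: it belongs to `T` and none of its two children does. -/
def IsLeaf (T : Set (ℕ × ℕ)) (t a : ℕ) : Prop :=
  (t, a) ∈ T ∧ (t + 1, a) ∉ T ∧ (t + 1, a + 2 ^ t) ∉ T

/-- `Anc T t a`: the set of levels `ℓ < t` at which the ancestor `(ℓ, a % 2^ℓ)` of the
node `(t, a)` has two children in `T`.  Its cardinality is the weight `w_T(v)`. -/
def Anc (T : Set (ℕ × ℕ)) (t a : ℕ) : Finset ℕ :=
  (Finset.range t).filter fun ℓ =>
    (ℓ + 1, a % 2 ^ ℓ) ∈ T ∧ (ℓ + 1, a % 2 ^ ℓ + 2 ^ ℓ) ∈ T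

/-- The `d`-dimensional adaptive aliasing `(v, T)`-isolating filter in the Fourier domain,
obtained by tensoring one-dimensional adaptive aliasing filters: for a leaf `v = (t, a)`
whose label has coordinates `f_q = (a / 2^{q⬝m}) % 2^m`, and a frequency `ξ ∈ [n]^d`
(given as a function `ξ : ℕ → ℕ` on coordinates `q < d`),
`Ĝ_v(ξ) = 2^{-w_T(v)} ∏_{ℓ ∈ Anc(v,T)} (1 + e^{2πi (ξ_{⌊ℓ/m⌋} − f_{⌊ℓ/m⌋}) / 2^{(ℓ mod m)+1}})`. -/
def filtD (m : ℕ) (T : Set (ℕ × ℕ)) (t a : ℕ) (ξ : ℕ → ℕ) : ℂ :=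
  (2 : ℂ) ^ (-((Anc T t a).card : ℤ)) *
    ∏ ℓ ∈ Anc T t a,
      (1 + Complex.exp (2 * (Real.pi : ℂ) * Complex.I *
        ((ξ (ℓ / m) : ℂ) - ((a / 2 ^ (ℓ / m * m) % 2 ^ m : ℕ) : ℂ)) / 2 ^ (ℓ % m + 1)))

/-! ### Auxiliary machinery -/

def ee (m : ℕ) (ξ : ℕ → ℕ) (ℓ a : ℕ) : ℂ :=
  Complex.exp (2 * (Real.pi : ℂ) * Complex.I *
    ((ξ (ℓ / m) : ℂ) - ((a / 2 ^ (ℓ / m * m) % 2 ^ m : ℕ) : ℂ)) / 2 ^ (ℓ % m + 1))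

lemma exp_key (x : ℂ) (r : ℕ) (u v : ℕ) (h : u ≡ v [MOD 2^(r+1)]) :
    Complex.exp (2 * (Real.pi : ℂ) * Complex.I * (x - u) / 2^(r+1)) =
    Complex.exp (2 * (Real.pi : ℂ) * Complex.I * (x - v) / 2^(r+1)) := by
  obtain ⟨k, hk⟩ := (Int.ModEq.dvd (Int.natCast_modEq_iff.2 h).symm)
  have hu : (u : ℂ) = v + k * 2^(r+1) := by
    have h' : (u : ℤ) = v + k * 2^(r+1) := by push_cast at hk; linarith
    exact_mod_cast congrArg (Int.cast : ℤ → ℂ) h'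
  have hexp : 2 * (Real.pi : ℂ) * Complex.I * (x - u) / 2^(r+1) =
      2 * (Real.pi : ℂ) * Complex.I * (x - v) / 2^(r+1) + ((-k : ℤ) : ℂ) * (2 * Real.pi * Complex.I) := by
    rw [hu]; push_cast; field_simp; ring
  rw [hexp, Complex.exp_add, Complex.exp_int_mul_two_pi_mul_I, mul_one]

lemma exp_flip (x : ℂ) (r : ℕ) (u v : ℕ) (h : u ≡ v + 2^r [MOD 2^(r+1)]) :
    Complex.exp (2 * (Real.pi : ℂ) * Complex.I * (x - u) / 2^(r+1)) =
    - Complex.exp (2 * (Real.pi : ℂ) * Complex.I * (x - v) / 2^(r+1)) := by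
  obtain ⟨k, hk⟩ := (Int.ModEq.dvd (Int.natCast_modEq_iff.2 h).symm)
  have hu : (u : ℂ) = v + 2^r + k * 2^(r+1) := by
    have h' : (u : ℤ) = v + 2^r + k * 2^(r+1) := by push_cast at hk; linarith
    exact_mod_cast congrArg (Int.cast : ℤ → ℂ) h'
  have hexp : 2 * (Real.pi : ℂ) * Complex.I * (x - u) / 2^(r+1) =
      (2 * (Real.pi : ℂ) * Complex.I * (x - v) / 2^(r+1) + ((-k : ℤ) : ℂ) * (2 * Real.pi * Complex.I))
        + ((-1 : ℤ) : ℂ) * Real.pi * Complex.I := by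
    rw [hu]; push_cast; field_simp; ring
  rw [hexp, Complex.exp_add, Complex.exp_add, Complex.exp_int_mul_two_pi_mul_I, mul_one]
  have h2 : ((-1 : ℤ) : ℂ) * Real.pi * Complex.I = -(Real.pi * Complex.I) := by push_cast; ring
  rw [h2, Complex.exp_neg, Complex.exp_pi_mul_I]
  field_simp

lemma ee_congr (m : ℕ) (ξ : ℕ → ℕ) (ℓ a b : ℕ) (hm : ℓ % m < m)
    (hab : a % 2 ^ (ℓ + 1) = b % 2 ^ (ℓ + 1)) : ee m ξ ℓ a = ee m ξ ℓ b := by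
  set q := ℓ / m with hq; set r := ℓ % m with hr
  have h0 : m * q + r = ℓ := Nat.div_add_mod ℓ m
  have hl : ℓ + 1 = q * m + (r + 1) := by rw [mul_comm q m]; linarith
  have hdvd : (2:ℕ) ^ (r + 1) ∣ 2 ^ m := pow_dvd_pow 2 hm
  have h1 : ∀ x : ℕ, x / 2 ^ (q * m) % 2 ^ m % 2 ^ (r + 1) = x % 2 ^ (ℓ + 1) / 2 ^ (q * m) := by
    intro x
    rw [Nat.mod_mod_of_dvd _ hdvd, ← Nat.mod_mul_right_div_self, ← pow_add, ← hl]
  have key : a / 2 ^ (q * m) % 2 ^ m ≡ b / 2 ^ (q * m) % 2 ^ m [MOD 2 ^ (r + 1)] := by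
    unfold Nat.ModEq
    rw [h1, h1, hab]
  exact exp_key _ r _ _ key

lemma ee_flip (m : ℕ) (ξ : ℕ → ℕ) (ℓ a : ℕ) (hm : ℓ % m < m) :
    ee m ξ ℓ (a + 2 ^ ℓ) = - ee m ξ ℓ a := by
  set q := ℓ / m with hq; set r := ℓ % m with hr
  have h0 : m * q + r = ℓ := Nat.div_add_mod ℓ m
  have hl : ℓ = r + q * m := by rw [mul_comm q m]; linarith
  have hdvd : (2:ℕ) ^ (r + 1) ∣ 2 ^ m := pow_dvd_pow 2 hm
  have hdiv : (a + 2 ^ ℓ) / 2 ^ (q * m) = a / 2 ^ (q * m) + 2 ^ r := by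
    have h2 : (2:ℕ) ^ ℓ = 2 ^ r * 2 ^ (q * m) := by rw [← pow_add, ← hl]
    rw [h2, Nat.add_mul_div_right _ _ (by positivity)]
  have key : (a + 2 ^ ℓ) / 2 ^ (q * m) % 2 ^ m ≡
      a / 2 ^ (q * m) % 2 ^ m + 2 ^ r [MOD 2 ^ (r + 1)] := by
    calc (a + 2 ^ ℓ) / 2 ^ (q * m) % 2 ^ m
        ≡ (a / 2 ^ (q * m) + 2 ^ r) [MOD 2 ^ (r+1)] := by
          rw [hdiv]; exact (Nat.mod_modEq _ _).of_dvd hdvd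
      _ ≡ a / 2 ^ (q * m) % 2 ^ m + 2 ^ r [MOD 2 ^ (r+1)] :=
          Nat.ModEq.add_right _ (((Nat.mod_modEq _ _).of_dvd hdvd).symm)
  exact exp_flip _ r _ _ key

lemma abs_ee (m : ℕ) (ξ : ℕ → ℕ) (ℓ a : ℕ) : ‖ee m ξ ℓ a‖ = 1 := by
  unfold ee
  have : 2 * (Real.pi : ℂ) * Complex.I *
      ((ξ (ℓ / m) : ℂ) - ((a / 2 ^ (ℓ / m * m) % 2 ^ m : ℕ) : ℂ)) / 2 ^ (ℓ % m + 1) =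
      ((2 * Real.pi * ((ξ (ℓ / m) : ℝ) - ((a / 2 ^ (ℓ / m * m) % 2 ^ m : ℕ) : ℝ)) / 2 ^ (ℓ % m + 1) : ℝ) : ℂ) * Complex.I := by
    push_cast
    ring
  rw [this, Complex.norm_exp_ofReal_mul_I]

lemma energy_pair (e : ℂ) (he : ‖e‖ = 1) :
    ‖1 + e‖ ^ 2 / 4 + ‖1 + -e‖ ^ 2 / 4 = 1 := by
  have hn : Complex.normSq e = 1 := by rw [← Complex.sq_norm, he]; norm_num
  have ha : (1 : ℂ) + -e = 1 - e := by ring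
  rw [Complex.sq_norm, Complex.sq_norm, ha, Complex.normSq_add, Complex.normSq_sub,
    Complex.normSq_one, hn]
  ring

/-- ancestors of tree elements are tree elements -/
lemma mem_anc {D : ℕ} {T : Set (ℕ × ℕ)} (hT : IsSubtree D T) :
    ∀ t a : ℕ, (t, a) ∈ T → ∀ s, s ≤ t → (s, a % 2 ^ s) ∈ T := by
  intro t
  induction t with
  | zero =>
    intro a h s hs
    have hs0 : s = 0 := Nat.le_zero.mp hs
    subst hs0
    simpa [Nat.mod_one] using hT.1
  | succ t ih =>
    intro a h s hs
    rcases Nat.eq_or_lt_of_le hs with h' | h'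
    · subst h'
      rwa [Nat.mod_eq_of_lt (hT.2.2 _ _ h).2]
    · have hp := hT.2.1 t a h
      have h2 := ih _ hp s (by omega)
      rwa [Nat.mod_mod_of_dvd _ (pow_dvd_pow 2 (by omega))] at h2

lemma mod_succ_cases (t a x : ℕ) (hx : x < 2 ^ (t + 1)) (h : x % 2 ^ t = a) :
    x = a ∨ x = a + 2 ^ t := by
  have hd := Nat.div_add_mod x (2 ^ t)
  have hpos : 0 < (2:ℕ) ^ t := by positivity
  have h2 : x / 2 ^ t < 2 := by
    rw [Nat.div_lt_iff_lt_mul hpos]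
    rw [pow_succ] at hx
    linarith
  have h2' : x / 2 ^ t = 0 ∨ x / 2 ^ t = 1 := by
    rcases Nat.lt_or_ge (x / 2 ^ t) 1 with h3 | h3
    · exact Or.inl (Nat.lt_one_iff.mp h3)
    · exact Or.inr (Nat.le_antisymm (Nat.lt_succ_iff.mp h2) h3)
  rcases h2' with h' | h'
  · left; rw [h'] at hd; simpa [h] using hd.symm
  · right; rw [h'] at hd; rw [h, mul_one] at hd; omega

def wgt (m : ℕ) (T : Set (ℕ × ℕ)) (ξ : ℕ → ℕ) (t : ℕ) (p : ℕ × ℕ) : ℝ :=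
  ∏ ℓ ∈ Anc T p.1 p.2 \ Finset.range t, ‖1 + ee m ξ ℓ p.2‖ ^ 2 / 4

lemma sdiff_range_succ {s : Finset ℕ} {t : ℕ} (h : t ∈ s) :
    s \ Finset.range t = insert t (s \ Finset.range (t + 1)) := by
  ext ℓ
  simp only [Finset.mem_sdiff, Finset.mem_range, Finset.mem_insert]
  constructor
  · rintro ⟨h1, h2⟩
    by_cases hℓ : ℓ = t
    · exact Or.inl hℓ
    · exact Or.inr ⟨h1, by omega⟩
  · rintro (rfl | ⟨h1, h2⟩)
    · exact ⟨h, by omega⟩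
    · exact ⟨h1, by omega⟩

lemma sdiff_range_succ' {s : Finset ℕ} {t : ℕ} (h : t ∉ s) :
    s \ Finset.range t = s \ Finset.range (t + 1) := by
  ext ℓ
  simp only [Finset.mem_sdiff, Finset.mem_range]
  constructor
  · rintro ⟨h1, h2⟩
    refine ⟨h1, ?_⟩
    have : ℓ ≠ t := fun he => h (he ▸ h1)
    omega
  · rintro ⟨h1, h2⟩
    exact ⟨h1, by omega⟩

lemma leaf_filter {D : ℕ} {T : Set (ℕ × ℕ)} (hT : IsSubtree D T)
    {L : Finset (ℕ × ℕ)} (hL : ∀ p : ℕ × ℕ, p ∈ L ↔ IsLeaf T p.1 p.2)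
    {t a : ℕ} (hleaf : IsLeaf T t a) :
    L.filter (fun p => t ≤ p.1 ∧ p.2 % 2 ^ t = a) = {(t, a)} := by
  ext p
  simp only [Finset.mem_filter, Finset.mem_singleton]
  constructor
  · rintro ⟨hpL, hpt, hpa⟩
    have hp := (hL p).1 hpL
    rcases Nat.eq_or_lt_of_le hpt with h' | h'
    · have hlt : p.2 < 2 ^ p.1 := (hT.2.2 _ _ hp.1).2
      rw [← h'] at hlt
      have h2 : p.2 = a := by rw [← hpa, Nat.mod_eq_of_lt hlt]
      rw [Prod.ext_iff]
      exact ⟨h'.symm, h2⟩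
    · exfalso
      have hanc := mem_anc hT p.1 p.2 hp.1 (t + 1) h'
      have hlt : p.2 % 2 ^ (t + 1) < 2 ^ (t + 1) := Nat.mod_lt _ (by positivity)
      have hmod : p.2 % 2 ^ (t + 1) % 2 ^ t = a := by
        rw [Nat.mod_mod_of_dvd _ (pow_dvd_pow 2 (Nat.le_succ t)), hpa]
      rcases mod_succ_cases t a _ hlt hmod with h0 | h0 <;> rw [h0] at hanc
      · exact hleaf.2.1 hanc
      · exact hleaf.2.2 hanc
  · rintro rfl
    exact ⟨(hL _).2 hleaf, le_refl _, Nat.mod_eq_of_lt (hT.2.2 _ _ hleaf.1).2⟩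

lemma child_filter {D : ℕ} {T : Set (ℕ × ℕ)} (hT : IsSubtree D T)
    {L : Finset (ℕ × ℕ)} (hL : ∀ p : ℕ × ℕ, p ∈ L ↔ IsLeaf T p.1 p.2)
    {t a b : ℕ} (hb : (t + 1, b) ∈ T) (hmod : b % 2 ^ t = a)
    (hother : ∀ x, x < 2 ^ (t + 1) → x % 2 ^ t = a → (t + 1, x) ∈ T → x = b) :
    L.filter (fun p => t ≤ p.1 ∧ p.2 % 2 ^ t = a) =
      L.filter (fun p => t + 1 ≤ p.1 ∧ p.2 % 2 ^ (t + 1) = b) := by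
  have hblt : b < 2 ^ (t + 1) := (hT.2.2 _ _ hb).2
  apply Finset.filter_congr
  intro p hpL
  have hp := (hL p).1 hpL
  constructor
  · rintro ⟨hpt, hpa⟩
    rcases Nat.eq_or_lt_of_le hpt with h' | h'
    · exfalso
      have hlt : p.2 < 2 ^ p.1 := (hT.2.2 _ _ hp.1).2
      rw [← h'] at hlt
      have h2 : p.2 = a := by rw [← hpa, Nat.mod_eq_of_lt hlt]
      rcases mod_succ_cases t a b hblt hmod with h0 | h0 <;>
        [exact (h' ▸ h2 ▸ hp.2.1 : ((t:ℕ)+1, a) ∉ T) (h0 ▸ hb);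
         exact (h' ▸ h2 ▸ hp.2.2 : ((t:ℕ)+1, a + 2^t) ∉ T) (h0 ▸ hb)]
    · refine ⟨h', ?_⟩
      have hanc := mem_anc hT p.1 p.2 hp.1 (t + 1) h'
      have hlt : p.2 % 2 ^ (t + 1) < 2 ^ (t + 1) := Nat.mod_lt _ (by positivity)
      have hmod2 : p.2 % 2 ^ (t + 1) % 2 ^ t = a := by
        rw [Nat.mod_mod_of_dvd _ (pow_dvd_pow 2 (Nat.le_succ t)), hpa]
      exact hother _ hlt hmod2 hanc
  · rintro ⟨hpt, hpb⟩
    refine ⟨by omega, ?_⟩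
    rw [← Nat.mod_mod_of_dvd _ (pow_dvd_pow 2 (Nat.le_succ t)), hpb, hmod]

lemma anc_subset (T : Set (ℕ × ℕ)) (t a : ℕ) : Anc T t a ⊆ Finset.range t :=
  Finset.filter_subset _ _

lemma wgt_eq_one {m : ℕ} {T : Set (ℕ × ℕ)} {ξ : ℕ → ℕ} {t : ℕ} {p : ℕ × ℕ}
    (h : p.1 ≤ t) : wgt m T ξ t p = 1 := by
  unfold wgt
  rw [Finset.sdiff_eq_empty_iff_subset.2
    ((anc_subset T p.1 p.2).trans (Finset.range_subset_range.2 h)), Finset.prod_empty]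

lemma wgt_step {D m : ℕ} {T : Set (ℕ × ℕ)} (hT : IsSubtree D T) (ξ : ℕ → ℕ)
    {t a b : ℕ} (htm : t % m < m) (h0 : (t + 1, a) ∈ T) (h1 : (t + 1, a + 2 ^ t) ∈ T)
    (hb : (t + 1, b) ∈ T) (hmod : b % 2 ^ t = a) {p : ℕ × ℕ}
    (hpt : t + 1 ≤ p.1) (hpb : p.2 % 2 ^ (t + 1) = b) :
    wgt m T ξ t p = ‖1 + ee m ξ t b‖ ^ 2 / 4 * wgt m T ξ (t + 1) p := by
  have hp2t : p.2 % 2 ^ t = a := by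
    rw [← Nat.mod_mod_of_dvd _ (pow_dvd_pow 2 (Nat.le_succ t)), hpb, hmod]
  have htA : t ∈ Anc T p.1 p.2 := by
    refine Finset.mem_filter.2 ⟨Finset.mem_range.2 (by omega), ?_, ?_⟩ <;> rw [hp2t]
    exacts [h0, h1]
  unfold wgt
  rw [sdiff_range_succ htA, Finset.prod_insert (by simp)]
  congr 2
  have hblt : b < 2 ^ (t + 1) := (hT.2.2 _ _ hb).2
  rw [ee_congr m ξ t p.2 b htm (by rw [hpb, Nat.mod_eq_of_lt hblt])]

lemma wgt_skip {m : ℕ} {T : Set (ℕ × ℕ)} (ξ : ℕ → ℕ)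
    {t a : ℕ} (hnot : (t + 1, a) ∉ T ∨ (t + 1, a + 2 ^ t) ∉ T) {p : ℕ × ℕ}
    (hp2t : p.2 % 2 ^ t = a) :
    wgt m T ξ t p = wgt m T ξ (t + 1) p := by
  have htA : t ∉ Anc T p.1 p.2 := by
    intro hmem
    have h2 := (Finset.mem_filter.1 hmem).2
    rw [hp2t] at h2
    tauto
  unfold wgt
  rw [sdiff_range_succ' htA]

lemma main_ind {m d : ℕ} {T : Set (ℕ × ℕ)} (hT : IsSubtree (d * m) T)
    {L : Finset (ℕ × ℕ)} (hL : ∀ p : ℕ × ℕ, p ∈ L ↔ IsLeaf T p.1 p.2) (ξ : ℕ → ℕ) :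
    ∀ k t a, d * m ≤ t + k → (t, a) ∈ T →
      ∑ p ∈ L.filter (fun p => t ≤ p.1 ∧ p.2 % 2 ^ t = a), wgt m T ξ t p = 1 := by
  intro k
  induction k with
  | zero =>
    intro t a hk ht
    have h0 : (t + 1, a) ∉ T := fun h => by have := (hT.2.2 _ _ h).1; omega
    have h1 : (t + 1, a + 2 ^ t) ∉ T := fun h => by have := (hT.2.2 _ _ h).1; omega
    rw [leaf_filter hT hL ⟨ht, h0, h1⟩, Finset.sum_singleton]
    exact wgt_eq_one (le_refl t)
  | succ k ih =>
    intro t a hk ht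
    have ha : a < 2 ^ t := (hT.2.2 _ _ ht).2
    have hmm : ∀ x : ℕ, (t + 1, x) ∈ T → t % m < m := by
      intro x hx
      have h2 := (hT.2.2 _ _ hx).1
      have hm0 : 0 < m := by
        rcases Nat.eq_zero_or_pos m with rfl | h
        · rw [Nat.mul_zero] at h2; omega
        · exact h
      exact Nat.mod_lt _ hm0
    by_cases h0 : (t + 1, a) ∈ T <;> by_cases h1 : (t + 1, a + 2 ^ t) ∈ T
    · -- both children in T
      have hm : t % m < m := hmm _ h0
      have hsplit : L.filter (fun p => t ≤ p.1 ∧ p.2 % 2 ^ t = a) =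
          L.filter (fun p => t + 1 ≤ p.1 ∧ p.2 % 2 ^ (t + 1) = a) ∪
          L.filter (fun p => t + 1 ≤ p.1 ∧ p.2 % 2 ^ (t + 1) = a + 2 ^ t) := by
        ext p
        simp only [Finset.mem_filter, Finset.mem_union]
        constructor
        · rintro ⟨hpL, hpt, hpa⟩
          have hp := (hL p).1 hpL
          rcases Nat.eq_or_lt_of_le hpt with h' | h'
          · exfalso
            have hlt : p.2 < 2 ^ p.1 := (hT.2.2 _ _ hp.1).2
            rw [← h'] at hlt
            have h2 : p.2 = a := by rw [← hpa, Nat.mod_eq_of_lt hlt]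
            exact (h' ▸ h2 ▸ hp.2.1) h0
          · have hanc := mem_anc hT p.1 p.2 hp.1 (t + 1) h'
            have hlt : p.2 % 2 ^ (t + 1) < 2 ^ (t + 1) := Nat.mod_lt _ (by positivity)
            have hmod2 : p.2 % 2 ^ (t + 1) % 2 ^ t = a := by
              rw [Nat.mod_mod_of_dvd _ (pow_dvd_pow 2 (Nat.le_succ t)), hpa]
            rcases mod_succ_cases t a _ hlt hmod2 with h2 | h2
            · exact Or.inl ⟨hpL, h', h2⟩
            · exact Or.inr ⟨hpL, h', h2⟩
        · have harg : ∀ b : ℕ, b % 2 ^ t = a → p ∈ L → t + 1 ≤ p.1 → p.2 % 2 ^ (t + 1) = b →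
              p ∈ L ∧ t ≤ p.1 ∧ p.2 % 2 ^ t = a := by
            intro b hbmod hpL hpt hpb
            refine ⟨hpL, by omega, ?_⟩
            rw [← Nat.mod_mod_of_dvd _ (pow_dvd_pow 2 (Nat.le_succ t)), hpb, hbmod]
          rintro (⟨hpL, hpt, hpb⟩ | ⟨hpL, hpt, hpb⟩)
          · exact harg a (Nat.mod_eq_of_lt ha) hpL hpt hpb
          · exact harg (a + 2 ^ t) (by rw [Nat.add_mod_right, Nat.mod_eq_of_lt ha]) hpL hpt hpb
      have hdisj : Disjoint (L.filter (fun p => t + 1 ≤ p.1 ∧ p.2 % 2 ^ (t + 1) = a))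
          (L.filter (fun p => t + 1 ≤ p.1 ∧ p.2 % 2 ^ (t + 1) = a + 2 ^ t)) := by
        rw [Finset.disjoint_left]
        intro p hp1 hp2
        have e1 := (Finset.mem_filter.1 hp1).2.2
        have e2 := (Finset.mem_filter.1 hp2).2.2
        have h3 : (0:ℕ) < 2 ^ t := by positivity
        omega
      rw [hsplit, Finset.sum_union hdisj]
      have hpiece : ∀ b, (t + 1, b) ∈ T → b % 2 ^ t = a →
          ∑ p ∈ L.filter (fun p => t + 1 ≤ p.1 ∧ p.2 % 2 ^ (t + 1) = b), wgt m T ξ t p =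
          ‖1 + ee m ξ t b‖ ^ 2 / 4 := by
        intro b hbT hbmod
        have hcong : ∀ p ∈ L.filter (fun p => t + 1 ≤ p.1 ∧ p.2 % 2 ^ (t + 1) = b),
            wgt m T ξ t p = ‖1 + ee m ξ t b‖ ^ 2 / 4 * wgt m T ξ (t + 1) p := by
          intro p hp
          obtain ⟨hpL, hpt, hpb⟩ := Finset.mem_filter.1 hp
          exact wgt_step hT ξ hm h0 h1 hbT hbmod hpt hpb
        rw [Finset.sum_congr rfl hcong, ← Finset.mul_sum, ih (t + 1) b (by omega) hbT, mul_one]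
      rw [hpiece a h0 (Nat.mod_eq_of_lt ha),
        hpiece (a + 2 ^ t) h1 (by rw [Nat.add_mod_right, Nat.mod_eq_of_lt ha]),
        ee_flip m ξ t a hm]
      exact energy_pair _ (abs_ee m ξ t a)
    · -- only left child
      have hother : ∀ x, x < 2 ^ (t + 1) → x % 2 ^ t = a → (t + 1, x) ∈ T → x = a := by
        intro x hx hxa hxT
        rcases mod_succ_cases t a x hx hxa with h | h
        · exact h
        · exact absurd (h ▸ hxT) h1
      rw [child_filter hT hL h0 (Nat.mod_eq_of_lt ha) hother]
      have hcong : ∀ p ∈ L.filter (fun p => t + 1 ≤ p.1 ∧ p.2 % 2 ^ (t + 1) = a),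
          wgt m T ξ t p = wgt m T ξ (t + 1) p := by
        intro p hp
        obtain ⟨hpL, hpt, hpb⟩ := Finset.mem_filter.1 hp
        apply wgt_skip ξ (Or.inr h1)
        rw [← Nat.mod_mod_of_dvd _ (pow_dvd_pow 2 (Nat.le_succ t)), hpb, Nat.mod_eq_of_lt ha]
      rw [Finset.sum_congr rfl hcong]
      exact ih (t + 1) a (by omega) h0
    · -- only right child
      have hother : ∀ x, x < 2 ^ (t + 1) → x % 2 ^ t = a → (t + 1, x) ∈ T → x = a + 2 ^ t := by
        intro x hx hxa hxT
        rcases mod_succ_cases t a x hx hxa with h | h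
        · exact absurd (h ▸ hxT) h0
        · exact h
      rw [child_filter hT hL h1 (by rw [Nat.add_mod_right, Nat.mod_eq_of_lt ha]) hother]
      have hcong : ∀ p ∈ L.filter (fun p => t + 1 ≤ p.1 ∧ p.2 % 2 ^ (t + 1) = a + 2 ^ t),
          wgt m T ξ t p = wgt m T ξ (t + 1) p := by
        intro p hp
        obtain ⟨hpL, hpt, hpb⟩ := Finset.mem_filter.1 hp
        apply wgt_skip ξ (Or.inl h0)
        rw [← Nat.mod_mod_of_dvd _ (pow_dvd_pow 2 (Nat.le_succ t)), hpb,
          Nat.add_mod_right, Nat.mod_eq_of_lt ha]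
      rw [Finset.sum_congr rfl hcong]
      exact ih (t + 1) (a + 2 ^ t) (by omega) h1
    · -- leaf
      rw [leaf_filter hT hL ⟨ht, h0, h1⟩, Finset.sum_singleton]
      exact wgt_eq_one (le_refl t)

lemma filt_sq_eq_wgt (m : ℕ) (T : Set (ℕ × ℕ)) (ξ : ℕ → ℕ) (p : ℕ × ℕ) :
    ‖filtD m T p.1 p.2 ξ‖ ^ 2 = wgt m T ξ 0 p := by
  unfold filtD wgt ee
  rw [Finset.range_zero, Finset.sdiff_empty]
  rw [norm_mul, mul_pow, norm_prod, ← Finset.prod_pow, Finset.prod_div_distrib,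
    Finset.prod_const]
  have h4 : ‖(2:ℂ) ^ (-((Anc T p.1 p.2).card : ℤ))‖ ^ 2 =
      ((4:ℝ) ^ (Anc T p.1 p.2).card)⁻¹ := by
    rw [norm_zpow, Complex.norm_two, zpow_neg, zpow_natCast, inv_pow, ← pow_mul]
    rw [show (4:ℝ) = 2 ^ 2 by norm_num, ← pow_mul, mul_comm]
  rw [h4, div_eq_mul_inv, mul_comm]


/-- Unit partition of energy in `d` dimensions: for `N = n^d` with `n = 2^m` a power of two,
any subtree `T` of the `d`-dimensional FFT tree `T^full_N` with set of leaves `L`, and every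
frequency `ξ ∈ [n]^d`, one has `∑_{v ∈ Leaves(T)} |Ĝ_v(ξ)|² = 1`. -/
theorem stmt_9 (m d : ℕ) (T : Set (ℕ × ℕ)) (hT : IsSubtree (d * m) T)
    (L : Finset (ℕ × ℕ)) (hL : ∀ p : ℕ × ℕ, p ∈ L ↔ IsLeaf T p.1 p.2)
    (ξ : ℕ → ℕ) (hξ : ∀ q < d, ξ q < 2 ^ m) :
    ∑ p ∈ L, ‖filtD m T p.1 p.2 ξ‖ ^ 2 = 1 := by
  have h := main_ind hT hL ξ (d * m) 0 0 (by omega) hT.1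
  have hfil : L.filter (fun p => 0 ≤ p.1 ∧ p.2 % 2 ^ 0 = 0) = L :=
    Finset.filter_true_of_mem (fun p _ => ⟨Nat.zero_le _, by simp [Nat.mod_one]⟩)
  rw [hfil] at h
  rw [← h]
  exact Finset.sum_congr rfl fun p _ => filt_sq_eq_wgt m T ξ p
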